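/- Let Ω ⊆ ℝ^d be open, let ψ : Ω → Ω be continuous, let K ⊆ Ω be compact, let C > 0, and let d : Ω → ℝ be continuous with d = 0 on K and 0 < d(x) ≤ 1 for every x ∈ Ω∖K. Assume that for every x ∈ Ω there exists n ∈ ℕ with ψ_n(x) ∉ K. Then the series D(y) := Σ_{n=0}^∞ (C+1)^{−n}·d(ψ_n(y)) converges for every y ∈ Ω, the function D is continuous on Ω, D(y) > 0 for every y ∈ Ω, and D(ψ(x)) = (C+1)·D(x) for every x ∈ K. -/

import Mathlib

/-- The auxiliary series `D(y) = Σ_{n≥0} (C+1)^{−n} d(ψ_n(y))` converges, is continuous,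
is strictly positive, and satisfies `D(ψ(x)) = (C+1)·D(x)` on `K`. -/
theorem stmt_5 {m : ℕ} (Ω : Set (Fin m → ℝ)) (hΩ : IsOpen Ω)
    (ψ : ↥Ω → ↥Ω) (hψ : Continuous ψ)
    (K : Set ↥Ω) (hK : IsCompact K)
    (C : ℝ) (hC : 0 < C)
    (u : ↥Ω → ℝ) (hu : Continuous u)
    (huK : ∀ x ∈ K, u x = 0)
    (hupos : ∀ x : ↥Ω, x ∉ K → 0 < u x ∧ u x ≤ 1)
    (hesc : ∀ x : ↥Ω, ∃ n : ℕ, ψ^[n] x ∉ K) :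
    (∀ y : ↥Ω, Summable (fun n : ℕ => ((C + 1) ^ n)⁻¹ * u (ψ^[n] y)))
    ∧ Continuous (fun y : ↥Ω => ∑' n : ℕ, ((C + 1) ^ n)⁻¹ * u (ψ^[n] y))
    ∧ (∀ y : ↥Ω, 0 < ∑' n : ℕ, ((C + 1) ^ n)⁻¹ * u (ψ^[n] y))
    ∧ (∀ x ∈ K, (∑' n : ℕ, ((C + 1) ^ n)⁻¹ * u (ψ^[n] (ψ x)))
        = (C + 1) * ∑' n : ℕ, ((C + 1) ^ n)⁻¹ * u (ψ^[n] x)) := by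
  have hC1 : (1:ℝ) < C + 1 := by linarith
  have hC0 : (0:ℝ) < C + 1 := by linarith
  have hb : |(C + 1)⁻¹| < 1 := by
    rw [abs_of_pos (by positivity)]
    exact inv_lt_one_of_one_lt₀ hC1
  have hgeo : Summable (fun n : ℕ => ((C + 1)⁻¹) ^ n) := summable_geometric_of_lt_one
    (by positivity) (inv_lt_one_of_one_lt₀ hC1)
  have hnn : ∀ z : ↥Ω, 0 ≤ u z ∧ u z ≤ 1 := by
    intro z
    by_cases h : z ∈ K
    · rw [huK z h]; exact ⟨le_refl _, zero_le_one⟩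
    · exact ⟨(hupos z h).1.le, (hupos z h).2⟩
  have hbound : ∀ (y : ↥Ω) (n : ℕ),
      ‖((C + 1) ^ n)⁻¹ * u (ψ^[n] y)‖ ≤ ((C + 1)⁻¹) ^ n := by
    intro y n
    have h0 : (0:ℝ) ≤ ((C + 1) ^ n)⁻¹ := inv_nonneg.mpr (pow_nonneg hC0.le n)
    have h1 : 0 ≤ ((C + 1) ^ n)⁻¹ * u (ψ^[n] y) :=
      mul_nonneg h0 (hnn _).1
    rw [Real.norm_eq_abs, abs_of_nonneg h1, inv_pow]
    exact mul_le_of_le_one_right h0 (hnn _).2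
  have hsum : ∀ y : ↥Ω, Summable (fun n : ℕ => ((C + 1) ^ n)⁻¹ * u (ψ^[n] y)) := by
    intro y
    exact Summable.of_norm_bounded hgeo (hbound y)
  have htermnn : ∀ (y : ↥Ω) (n : ℕ), 0 ≤ ((C + 1) ^ n)⁻¹ * u (ψ^[n] y) := by
    intro y n
    have := (hnn (ψ^[n] y)).1
    positivity
  refine ⟨hsum, ?_, ?_, ?_⟩
  · apply continuous_tsum (u := fun n : ℕ => ((C + 1)⁻¹) ^ n)
    · intro n
      exact (continuous_const.mul (hu.comp (hψ.iterate n)))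
    · exact hgeo
    · intro n y; exact hbound y n
  · intro y
    obtain ⟨n, hn⟩ := hesc y
    have hpos : 0 < ((C + 1) ^ n)⁻¹ * u (ψ^[n] y) := by
      have := (hupos _ hn).1
      positivity
    exact Summable.tsum_pos (hsum y) (htermnn y) n hpos
  · intro x hx
    have h1 : ∑' n : ℕ, ((C + 1) ^ n)⁻¹ * u (ψ^[n] x)
        = ∑' n : ℕ, ((C + 1) ^ (n + 1))⁻¹ * u (ψ^[n + 1] x) := by
      rw [Summable.tsum_eq_zero_add (hsum x)]
      simp [huK x hx]
    rw [h1]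
    rw [← tsum_mul_left]
    congr 1
    funext n
    rw [Function.iterate_succ_apply]
    field_simp
    ring
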